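/- For all positive integers R and m there exists a constant E = E(R,m) such that: if G is a finite group with a normal subgroup N of cardinality at most R such that G/N is abelian, and every subgroup of G can be generated by at most m elements, then G contains an abelian subgroup of index at most E. -/

import Mathlib

open scoped commutatorElement

/-- For all positive integers `R` and `m` there is a constant `E = E(R,m)` such that:
any finite group `G` with a normal subgroup `N` of cardinality at most `R`, with `G/N`
abelian, and all of whose subgroups are generated by at most `m` elements, contains an
abelian subgroup of index at most `E`. -/
theorem stmt_4 (R m : ℕ) (hR : 0 < R) (hm : 0 < m) :
    ∃ E : ℕ, ∀ (G : Type) [Group G] [Finite G] (N : Subgroup G), N.Normal →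
      Nat.card N ≤ R →
      (∀ x y : G, ⁅x, y⁆ ∈ N) →
      (∀ H : Subgroup G, ∃ s : Finset G, s.card ≤ m ∧ Subgroup.closure (s : Set G) = H) →
      ∃ A : Subgroup G, (∀ a ∈ A, ∀ b ∈ A, a * b = b * a) ∧ A.index ≤ E := by
  refine ⟨R ^ m * R.factorial, ?_⟩
  intro G _ _ N hN hcard hcomm hgen
  haveI := hN
  set C : Subgroup G := Subgroup.centralizer (N : Set G) with hCdef
  -- the centralizer of an element of N is all of C
  have hcent : ∀ n ∈ N, ∀ c ∈ C, n * c = c * n := by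
    intro n hn c hc
    exact Subgroup.mem_centralizer_iff.mp hc n hn
  -- index of C ≤ R!
  have hCindex : C.index ≤ R.factorial := by
    have hker : (MulAut.conjNormal (H := N) : G →* MulAut N).ker ≤ C := by
      intro g hg
      rw [Subgroup.mem_centralizer_iff]
      intro n hn
      have h1 : (MulAut.conjNormal g ⟨n, hn⟩ : G) = ((⟨n, hn⟩ : N) : G) := by
        rw [MonoidHom.mem_ker.mp hg]; rfl
      rw [MulAut.conjNormal_apply] at h1
      have : g * n * g⁻¹ = n := h1
      calc n * g = g * n * g⁻¹ * g := by rw [this]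
        _ = g * n := by group
    have h2 : C.index ∣ (MulAut.conjNormal (H := N) : G →* MulAut N).ker.index :=
      Subgroup.index_dvd_of_le hker
    have h3 : (MulAut.conjNormal (H := N) : G →* MulAut N).ker.index
        = Nat.card (MulAut.conjNormal (H := N) : G →* MulAut N).range :=
      Subgroup.index_ker _
    classical
    haveI : Fintype N := Fintype.ofFinite _
    have h45 : Nat.card (MulAut.conjNormal (H := N) : G →* MulAut N).range
        ≤ Nat.card (Equiv.Perm N) := by
      apply Nat.card_le_card_of_injective
        (fun e : (MulAut.conjNormal (H := N) : G →* MulAut N).range => (((e : MulAut N) : N ≃ N)))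
      intro a b hab
      apply Subtype.ext
      exact MulEquiv.ext fun x => congrFun (congrArg Equiv.toFun hab) x
    have h6 : Nat.card (Equiv.Perm N) = (Nat.card N).factorial := by
      rw [Nat.card_eq_fintype_card, Nat.card_eq_fintype_card, Fintype.card_perm]
    have h7 : (Nat.card N).factorial ≤ R.factorial := Nat.factorial_le hcard
    have hkerpos : 0 < (MulAut.conjNormal (H := N) : G →* MulAut N).ker.index := by
      rw [h3]; exact Nat.card_pos
    calc C.index ≤ _ := Nat.le_of_dvd hkerpos h2
      _ ≤ R.factorial := by rw [h3]; omega
    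
  obtain ⟨s, hs_card, hs_closure⟩ := hgen C
  have hsC : ∀ x ∈ s, x ∈ C := fun x hx => hs_closure ▸ Subgroup.subset_closure hx
  set D : Subgroup G := ⨅ x : ↥s, Subgroup.centralizer {(x : G)} with hDdef
  refine ⟨C ⊓ D, ?_, ?_⟩
  · -- abelian
    intro a ha b hb
    have hbD : (b : G) ∈ D := hb.2
    have hCb : C ≤ Subgroup.centralizer {b} := by
      rw [← hs_closure]
      apply (Subgroup.closure_le _).mpr
      intro x hx
      have hx' : b ∈ Subgroup.centralizer {x} := by
        have := Subgroup.mem_iInf.mp hbD ⟨x, hx⟩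
        exact this
      have := Subgroup.mem_centralizer_iff.mp hx' x rfl
      rw [SetLike.mem_coe, Subgroup.mem_centralizer_iff]
      intro g hg
      rw [Set.mem_singleton_iff] at hg
      subst hg; exact this.symm
    have := Subgroup.mem_centralizer_iff.mp (hCb ha.1) b rfl
    exact this.symm
  · -- index bound
    have hle : C ⊓ D ≤ C := inf_le_left
    rw [← Subgroup.relIndex_mul_index hle]
    have h1 : (C ⊓ D).relIndex C = D.relIndex C := Subgroup.inf_relIndex_left _ _
    have hfac : ∀ x : ↥s, (Subgroup.centralizer {(x : G)}).relIndex C ≤ R := by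
      intro ⟨x, hxs⟩
      have hxC : x ∈ C := hsC x hxs
      -- the homomorphism y ↦ ⁅x, y⁆ from C to G
      have hmul : ∀ y z : C, ⁅x, ((y * z : C) : G)⁆ = ⁅x, (y : G)⁆ * ⁅x, (z : G)⁆ := by
        intro y z
        have hyN : (y : G) ∈ C := y.2
        have hconj : (y : G) * ⁅x, (z : G)⁆ * (y : G)⁻¹ = ⁅x, (z : G)⁆ := by
          have h := hcent _ (hcomm x z) _ hyN
          rw [← h]
          exact mul_inv_cancel_right _ _
        calc ⁅x, ((y * z : C) : G)⁆ = ⁅x, (y : G) * (z : G)⁆ := rfl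
          _ = ⁅x, (y : G)⁆ * ((y : G) * ⁅x, (z : G)⁆ * (y : G)⁻¹) := by
              simp only [commutatorElement_def]; group
          _ = ⁅x, (y : G)⁆ * ⁅x, (z : G)⁆ := by rw [hconj]
      let f : C →* G := {
        toFun := fun y => ⁅x, (y : G)⁆
        map_one' := by simp
        map_mul' := hmul }
      have hrange : f.range ≤ N := by
        rintro g ⟨y, rfl⟩
        exact hcomm x y
      have hkerle : f.ker ≤ (Subgroup.centralizer {x}).subgroupOf C := by
        intro y hy
        have : ⁅x, (y : G)⁆ = 1 := hy
        rw [commutatorElement_eq_one_iff_mul_comm] at this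
        rw [Subgroup.mem_subgroupOf, Subgroup.mem_centralizer_iff]
        intro g hg
        rw [Set.mem_singleton_iff] at hg
        subst hg; exact this
      have hdvd : ((Subgroup.centralizer {x}).subgroupOf C).index ∣ f.ker.index :=
        Subgroup.index_dvd_of_le hkerle
      have hkeq : f.ker.index = Nat.card f.range := Subgroup.index_ker f
      have hkpos : 0 < f.ker.index := by rw [hkeq]; exact Nat.card_pos
      have := Nat.le_of_dvd hkpos hdvd
      have hrc : Nat.card f.range ≤ Nat.card N := Subgroup.card_le_of_le hrange
      calc (Subgroup.centralizer {x}).relIndex C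
          = ((Subgroup.centralizer {x}).subgroupOf C).index := rfl
        _ ≤ f.ker.index := this
        _ = Nat.card f.range := hkeq
        _ ≤ Nat.card N := hrc
        _ ≤ R := hcard
    have h2 : D.relIndex C ≤ ∏ x : ↥s, (Subgroup.centralizer {(x : G)}).relIndex C :=
      Subgroup.relIndex_iInf_le _
    have h3 : ∏ x : ↥s, (Subgroup.centralizer {(x : G)}).relIndex C ≤ R ^ s.card := by
      have := Finset.prod_le_pow_card Finset.univ
        (fun x : ↥s => (Subgroup.centralizer {(x : G)}).relIndex C) R
        (fun x _ => hfac x)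
      simpa [Fintype.card_coe] using this
    have h4 : R ^ s.card ≤ R ^ m := Nat.pow_le_pow_right hR hs_card
    have hrel : (C ⊓ D).relIndex C ≤ R ^ m := by rw [h1]; omega
    exact Nat.mul_le_mul hrel hCindex
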